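/- arXiv:1402.3995 — 3 statements merged into one kernel-verified Lean document; each statement's English description precedes it below -/
import Mathlib

section
/- Let φ̂ : ℝ² → ℂ be bounded and Lipschitz continuous. Then for k → 0+, k² ∫_{ℝ²} |φ̂(p)|²/(|p|²+k²)² dp = π|φ̂(0)|² + O(√k). -/
open MeasureTheory Asymptotics

section Helpers
open Set Real Metric


theorem aux1 (k : ℝ) (hk : 0 < k) :
    ∫ y in Ioi (0:ℝ), y * (k^2/(y^2+k^2)^2) = 1/2 := by
  have hd : ∀ y : ℝ, y ∈ Ici (0:ℝ) → HasDerivAt (fun y => -k^2/(2*(y^2+k^2)))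
      (y * (k^2/(y^2+k^2)^2)) y := by
    intro y _
    have hu : HasDerivAt (fun y : ℝ => 2*(y^2+k^2)) (2*(2*y)) y := by
      simpa using (((hasDerivAt_pow 2 y).add_const (k^2)).const_mul 2)
    have hne : 2*(y^2+k^2) ≠ 0 := by positivity
    have := (hasDerivAt_const y (-k^2)).div hu hne
    refine this.congr_deriv ?_
    field_simp
    ring
  have htend : Filter.Tendsto (fun y : ℝ => -k^2/(2*(y^2+k^2))) Filter.atTop (nhds 0) := by
    apply Filter.Tendsto.div_atTop tendsto_const_nhds
    apply Filter.Tendsto.const_mul_atTop (by norm_num : (0:ℝ) < 2)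
    exact Filter.tendsto_atTop_add_const_right _ _ (Filter.tendsto_pow_atTop (by norm_num))
  have := integral_Ioi_of_hasDerivAt_of_nonneg' (a := 0) (l := 0) hd ?_ htend
  · rw [this]; field_simp; ring
  · intro y hy
    have : 0 < y := hy
    positivity

theorem aux2 (k : ℝ) (hk : 0 < k) :
    (∫ y in Ioi (0:ℝ), k^2/(y^2+k^2)) = k * (π/2) ∧
      IntegrableOn (fun y : ℝ => k^2/(y^2+k^2)) (Ioi 0) := by
  have hd : ∀ y : ℝ, y ∈ Ici (0:ℝ) → HasDerivAt (fun y => k * Real.arctan (y/k))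
      (k^2/(y^2+k^2)) y := by
    intro y _
    have h1 : HasDerivAt (fun y : ℝ => y/k) (1/k) y := (hasDerivAt_id y).div_const k
    have h2 := (Real.hasDerivAt_arctan (y/k)).comp y h1
    have := h2.const_mul k
    refine this.congr_deriv ?_
    field_simp
    ring
  have hpos : ∀ y : ℝ, y ∈ Ioi (0:ℝ) → 0 ≤ k^2/(y^2+k^2) := by
    intro y _; positivity
  have htend : Filter.Tendsto (fun y : ℝ => k * Real.arctan (y/k)) Filter.atTop
      (nhds (k * (π/2))) := by
    apply Filter.Tendsto.const_mul
    exact Real.tendsto_arctan_atTop.mono_right nhdsWithin_le_nhds |>.comp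
      (Filter.tendsto_id.atTop_div_const hk)
  constructor
  · have := integral_Ioi_of_hasDerivAt_of_nonneg' hd hpos htend
    rw [this]; simp
  · exact integrableOn_Ioi_deriv_of_nonneg' hd hpos htend

theorem aux3 (k : ℝ) (hk : 0 < k) :
    IntegrableOn (fun y : ℝ => y * (y * (k^2/(y^2+k^2)^2))) (Ioi 0) ∧
      (∫ y in Ioi (0:ℝ), y * (y * (k^2/(y^2+k^2)^2))) ≤ k * (π/2) := by
  obtain ⟨hval, hint⟩ := aux2 k hk
  have hbound : ∀ y : ℝ, y ∈ Ioi (0:ℝ) → y * (y * (k^2/(y^2+k^2)^2)) ≤ k^2/(y^2+k^2) := by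
    intro y hy
    have hy : 0 < y := hy
    rw [← mul_div_assoc, ← mul_div_assoc, div_le_div_iff₀ (by positivity) (by positivity)]
    nlinarith [mul_nonneg (pow_nonneg hk.le 4) (add_nonneg (sq_nonneg y) (sq_nonneg k))]
  have hcont : Continuous fun y : ℝ => y * (y * (k^2/(y^2+k^2)^2)) := by
    apply continuous_id.mul
    apply continuous_id.mul
    exact continuous_const.div (by continuity) fun y => by positivity
  have hmeas := hcont.aestronglyMeasurable (μ := volume.restrict (Ioi 0))
  have h1 : IntegrableOn (fun y : ℝ => y * (y * (k^2/(y^2+k^2)^2))) (Ioi 0) := by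
    apply hint.mono' hmeas
    filter_upwards [ae_restrict_mem measurableSet_Ioi] with y hy
    rw [Real.norm_eq_abs, abs_of_nonneg (by have : 0 < y := hy; positivity)]
    exact hbound y hy
  refine ⟨h1, ?_⟩
  calc (∫ y in Ioi (0:ℝ), y * (y * (k^2/(y^2+k^2)^2)))
      ≤ ∫ y in Ioi (0:ℝ), k^2/(y^2+k^2) :=
        setIntegral_mono_on h1 hint measurableSet_Ioi hbound
    _ = k * (π/2) := hval

local notation "E2" => EuclideanSpace ℝ (Fin 2)

theorem auxball : (volume (Metric.ball (0:EuclideanSpace ℝ (Fin 2)) 1)).toReal = π := by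
  rw [EuclideanSpace.volume_ball]
  have h2 : (Fintype.card (Fin 2) : ℝ) = 2 := by simp
  simp only [Fintype.card_fin]
  rw [show ((2:ℕ):ℝ)/2 + 1 = 2 by norm_num, Real.Gamma_two]
  rw [Real.sq_sqrt Real.pi_nonneg]
  simp [Real.pi_nonneg]

theorem auxradial (f : ℝ → ℝ) :
    ∫ p : EuclideanSpace ℝ (Fin 2), f ‖p‖ = 2 * π * ∫ y in Ioi (0:ℝ), y * f y := by
  rw [MeasureTheory.integral_fun_norm_addHaar (volume : Measure (EuclideanSpace ℝ (Fin 2))) f]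
  simp only [finrank_euclideanSpace, Fintype.card_fin, auxball, smul_eq_mul, nsmul_eq_mul,
    pow_one]
  ring_nf
  rw [measureReal_def, auxball]
  ring

theorem auxkey (k : ℝ) (hk : 0 < k) (hk1 : k ≤ 1) (a : ℝ) (ha : 0 ≤ a) :
    k^2 * (k^2 * (1+a)^4) ≤ 4 * ((a^2+k^2)^2) := by
  have hk2 : k^2 ≤ 1 := by nlinarith
  have h1 : k^2*(1+a)^2 ≤ 2*(a^2+k^2) := by
    nlinarith [mul_nonneg (sq_nonneg k) (sq_nonneg (1-a)),
      mul_nonneg (by linarith : (0:ℝ) ≤ 1-k^2) (sq_nonneg a)]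
  have h2 : (0:ℝ) ≤ k^2*(1+a)^2 := by positivity
  nlinarith [mul_le_mul h1 h1 h2 (by positivity)]

theorem auxcontg (k : ℝ) (hk : 0 < k) :
    Continuous fun p : EuclideanSpace ℝ (Fin 2) => k^2/(‖p‖^2+k^2)^2 :=
  continuous_const.div (by continuity) fun p => by positivity

theorem auxboundg (k : ℝ) (hk : 0 < k) (hk1 : k ≤ 1) (p : EuclideanSpace ℝ (Fin 2)) :
    k^2/(‖p‖^2+k^2)^2 ≤ (4/k^2) * (1+‖p‖)^(-4:ℝ) := by
  have ha : (0:ℝ) ≤ ‖p‖ := norm_nonneg p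
  have h1 : (0:ℝ) < 1 + ‖p‖ := by linarith
  rw [show (-4:ℝ) = -(4:ℕ) by norm_num, Real.rpow_neg h1.le, Real.rpow_natCast]
  rw [show (4/k^2) * ((1+‖p‖)^4)⁻¹ = 4/(k^2*(1+‖p‖)^4) by field_simp]
  rw [div_le_div_iff₀ (by positivity) (by positivity)]
  have := auxkey k hk hk1 ‖p‖ ha
  nlinarith [this]

theorem auxintg (k : ℝ) (hk : 0 < k) (hk1 : k ≤ 1) :
    Integrable (fun p : EuclideanSpace ℝ (Fin 2) => k^2/(‖p‖^2+k^2)^2) := by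
  have hi : Integrable (fun p : EuclideanSpace ℝ (Fin 2) => (1+‖p‖)^(-4:ℝ)) :=
    integrable_one_add_norm (by simp [finrank_euclideanSpace]; norm_num)
  apply (hi.const_mul (4/k^2)).mono' ((auxcontg k hk).aestronglyMeasurable)
  filter_upwards with p
  rw [Real.norm_eq_abs, abs_of_nonneg (by positivity)]
  exact auxboundg k hk hk1 p

theorem auxinth (k : ℝ) (hk : 0 < k) (hk1 : k ≤ 1) :
    Integrable (fun p : EuclideanSpace ℝ (Fin 2) => ‖p‖ * (k^2/(‖p‖^2+k^2)^2)) := by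
  have hi : Integrable (fun p : EuclideanSpace ℝ (Fin 2) => (1+‖p‖)^(-3:ℝ)) :=
    integrable_one_add_norm (by simp [finrank_euclideanSpace]; norm_num)
  apply (hi.const_mul (4/k^2)).mono'
    (continuous_norm.mul (auxcontg k hk) |>.aestronglyMeasurable)
  filter_upwards with p
  have ha : (0:ℝ) ≤ ‖p‖ := norm_nonneg p
  have h1 : (0:ℝ) < 1 + ‖p‖ := by linarith
  simp only [Pi.mul_apply]
  rw [Real.norm_eq_abs, abs_of_nonneg (by positivity)]
  calc ‖p‖ * (k^2/(‖p‖^2+k^2)^2) ≤ (1+‖p‖) * ((4/k^2) * (1+‖p‖)^(-4:ℝ)) := by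
        apply mul_le_mul (by linarith) (auxboundg k hk hk1 p) (by positivity) h1.le
    _ = (4/k^2) * (1+‖p‖)^(-3:ℝ) := by
        rw [show (-3:ℝ) = 1 + (-4:ℝ) by norm_num, Real.rpow_add h1, Real.rpow_one]
        ring


end Helpers

section Main
open Set Real Metric

theorem stmt7 (φhat : EuclideanSpace ℝ (Fin 2) → ℂ)
    (hbdd : ∃ C : ℝ, ∀ p, ‖φhat p‖ ≤ C)
    (hlip : ∃ L : NNReal, LipschitzWith L φhat) :
    (fun k : ℝ =>
        k ^ 2 * (∫ p, ‖φhat p‖ ^ 2 / (‖p‖ ^ 2 + k ^ 2) ^ 2) -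
          Real.pi * ‖φhat 0‖ ^ 2)
      =O[nhdsWithin 0 (Set.Ioi 0)] fun k => Real.sqrt k := by
  obtain ⟨C, hC⟩ := hbdd
  obtain ⟨L, hL⟩ := hlip
  have hC0 : 0 ≤ C := le_trans (norm_nonneg _) (hC 0)
  have hL0 : (0:ℝ) ≤ L := L.coe_nonneg
  have hfcont : Continuous fun p : EuclideanSpace ℝ (Fin 2) => ‖φhat p‖ ^ 2 :=
    (continuous_norm.comp hL.continuous).pow 2
  have hfdiff : ∀ p : EuclideanSpace ℝ (Fin 2),
      |‖φhat p‖ ^ 2 - ‖φhat 0‖ ^ 2| ≤ 2*C*((L:ℝ)*‖p‖) := by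
    intro p
    have hd := hL.dist_le_mul p 0
    rw [dist_zero_right] at hd
    have h1 : |‖φhat p‖ - ‖φhat 0‖| ≤ (L:ℝ)*‖p‖ := by
      calc |‖φhat p‖ - ‖φhat 0‖|
          ≤ ‖φhat p - φhat 0‖ := abs_norm_sub_norm_le _ _
        _ = dist (φhat p) (φhat 0) := (Complex.dist_eq _ _).symm
        _ ≤ (L:ℝ)*‖p‖ := hd
    have h2 : ‖φhat p‖ + ‖φhat 0‖ ≤ 2*C := by
      have := add_le_add (hC p) (hC 0); linarith
    rw [show ‖φhat p‖ ^ 2 - ‖φhat 0‖ ^ 2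
        = (‖φhat p‖ - ‖φhat 0‖)
          * (‖φhat p‖ + ‖φhat 0‖) by ring, abs_mul,
      abs_of_nonneg (add_nonneg (norm_nonneg _) (norm_nonneg _))]
    calc |‖φhat p‖ - ‖φhat 0‖|
          * (‖φhat p‖ + ‖φhat 0‖)
        ≤ ((L:ℝ)*‖p‖) * (2*C) := by
          apply mul_le_mul h1 h2 (add_nonneg (norm_nonneg _) (norm_nonneg _))
          positivity
      _ = 2*C*((L:ℝ)*‖p‖) := by ring
  rw [isBigO_iff]
  refine ⟨2*C*(L:ℝ)*π^2, ?_⟩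
  filter_upwards [Ioo_mem_nhdsGT_of_mem (show (0:ℝ) ∈ Ico (0:ℝ) 1 by constructor <;> norm_num)]
    with k hk
  obtain ⟨hk0, hk1⟩ := hk
  have hk1 : k ≤ 1 := hk1.le
  have hg := auxintg k hk0 hk1
  have hh := auxinth k hk0 hk1
  have hgval : ∫ p : EuclideanSpace ℝ (Fin 2), k^2/(‖p‖^2+k^2)^2 = π := by
    have h := auxradial (fun y => k^2/(y^2+k^2)^2)
    rw [h, aux1 k hk0]; ring
  have hhval : ∫ p : EuclideanSpace ℝ (Fin 2), ‖p‖ * (k^2/(‖p‖^2+k^2)^2) ≤ π^2 * k := by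
    have h := auxradial (fun y => y * (k^2/(y^2+k^2)^2))
    rw [h]
    calc 2*π*∫ y in Ioi (0:ℝ), y * (y * (k^2/(y^2+k^2)^2))
        ≤ 2*π*(k*(π/2)) := by
          apply mul_le_mul_of_nonneg_left (aux3 k hk0).2 (by positivity)
      _ = π^2*k := by ring
  have hfg : Integrable (fun p : EuclideanSpace ℝ (Fin 2) =>
      ‖φhat p‖ ^ 2 * (k^2/(‖p‖^2+k^2)^2)) := by
    apply (hg.const_mul (C^2)).mono' (hfcont.mul (auxcontg k hk0)).aestronglyMeasurable
    filter_upwards with p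
    simp only [Pi.mul_apply]
    rw [Real.norm_eq_abs, abs_of_nonneg (by positivity)]
    apply mul_le_mul_of_nonneg_right _ (by positivity)
    exact pow_le_pow_left₀ (norm_nonneg _) (hC p) 2
  have e1 : k ^ 2 * (∫ p : EuclideanSpace ℝ (Fin 2),
      ‖φhat p‖ ^ 2 / (‖p‖ ^ 2 + k ^ 2) ^ 2)
      = ∫ p : EuclideanSpace ℝ (Fin 2), ‖φhat p‖ ^ 2 * (k^2/(‖p‖^2+k^2)^2) := by
    rw [← integral_const_mul]
    exact integral_congr_ae (Filter.Eventually.of_forall fun p => by ring)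
  have e2 : π * ‖φhat 0‖ ^ 2
      = ∫ p : EuclideanSpace ℝ (Fin 2), ‖φhat 0‖ ^ 2 * (k^2/(‖p‖^2+k^2)^2) := by
    rw [integral_const_mul, hgval]; ring
  have e3 : k ^ 2 * (∫ p : EuclideanSpace ℝ (Fin 2),
        ‖φhat p‖ ^ 2 / (‖p‖ ^ 2 + k ^ 2) ^ 2) - π * ‖φhat 0‖ ^ 2
      = ∫ p : EuclideanSpace ℝ (Fin 2),
        (‖φhat p‖ ^ 2 - ‖φhat 0‖ ^ 2) * (k^2/(‖p‖^2+k^2)^2) := by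
    rw [e1, e2, ← integral_sub hfg (hg.const_mul (‖φhat 0‖ ^ 2))]
    exact integral_congr_ae (Filter.Eventually.of_forall fun p => by ring)
  rw [e3]
  have e4 : ‖∫ p : EuclideanSpace ℝ (Fin 2),
        (‖φhat p‖ ^ 2 - ‖φhat 0‖ ^ 2) * (k^2/(‖p‖^2+k^2)^2)‖
      ≤ ∫ p : EuclideanSpace ℝ (Fin 2), (2*C*(L:ℝ)) * (‖p‖ * (k^2/(‖p‖^2+k^2)^2)) := by
    apply norm_integral_le_of_norm_le (hh.const_mul (2*C*(L:ℝ)))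
    filter_upwards with p
    rw [Real.norm_eq_abs, abs_mul, abs_of_nonneg (show (0:ℝ) ≤ k^2/(‖p‖^2+k^2)^2 by positivity)]
    calc |‖φhat p‖ ^ 2 - ‖φhat 0‖ ^ 2| * (k^2/(‖p‖^2+k^2)^2)
        ≤ (2*C*((L:ℝ)*‖p‖)) * (k^2/(‖p‖^2+k^2)^2) :=
          mul_le_mul_of_nonneg_right (hfdiff p) (by positivity)
      _ = 2*C*(L:ℝ) * (‖p‖ * (k^2/(‖p‖^2+k^2)^2)) := by ring
  have e5 : (∫ p : EuclideanSpace ℝ (Fin 2), (2*C*(L:ℝ)) * (‖p‖ * (k^2/(‖p‖^2+k^2)^2)))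
      ≤ 2*C*(L:ℝ)*(π^2*k) := by
    rw [integral_const_mul]
    exact mul_le_mul_of_nonneg_left hhval (by positivity)
  have hksqrt : k ≤ Real.sqrt k := by
    nth_rewrite 1 [← Real.sqrt_sq hk0.le]
    exact Real.sqrt_le_sqrt (by nlinarith)
  calc ‖∫ p : EuclideanSpace ℝ (Fin 2),
        (‖φhat p‖ ^ 2 - ‖φhat 0‖ ^ 2) * (k^2/(‖p‖^2+k^2)^2)‖
      ≤ 2*C*(L:ℝ)*(π^2*k) := e4.trans e5
    _ = (2*C*(L:ℝ)*π^2) * k := by ring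
    _ ≤ 2*C*(L:ℝ)*π^2 * Real.sqrt k :=
        mul_le_mul_of_nonneg_left hksqrt
          (mul_nonneg (mul_nonneg (by linarith) hL0) (sq_nonneg π))
    _ = 2*C*(L:ℝ)*π^2 * ‖Real.sqrt k‖ := by
        rw [Real.norm_eq_abs, abs_of_nonneg (Real.sqrt_nonneg k)]

end Main
end

section
/- Let μ be a compactly supported finite positive measure on ℝ² satisfying the Kato condition: lim_{ε→0+} sup_{x∈ℝ²} ∫_{D_ε(x)} |ln|x-y|| dμ(y) = 0. Then for any constant C ∈ ℝ, the integral operator (Rf)(x) = ∫_{ℝ²} (-ln|x-y| + C) f(y) dμ(y) is bounded on L²(μ). -/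
open MeasureTheory ENNReal

lemma lintegral_CS {α : Type*} [MeasurableSpace α] (μ : Measure α) {k h : α → ℝ≥0∞}
    (hk : AEMeasurable k μ) (hh : AEMeasurable h μ) :
    (∫⁻ a, k a * h a ∂μ) ^ (2:ℝ) ≤
      (∫⁻ a, k a ∂μ) * (∫⁻ a, k a * h a ^ (2:ℝ) ∂μ) := by
  have hconj : Real.HolderConjugate 2 2 := Real.holderConjugate_iff.mpr ⟨one_lt_two, by norm_num⟩
  have hk2 : AEMeasurable (fun a => k a ^ (1/2:ℝ)) μ := hk.pow_const _
  have key := ENNReal.lintegral_mul_le_Lp_mul_Lq μ hconj hk2 (hk2.mul hh)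
  have e1 : ∀ a : α, (fun a => k a ^ (1/2:ℝ)) a * ((fun a => k a ^ (1/2:ℝ) * h a) a)
      = k a * h a := by
    intro a
    have : k a ^ (1/2:ℝ) * (k a ^ (1/2:ℝ)) = k a := by
      rw [← ENNReal.rpow_add_of_nonneg _ _ (by norm_num) (by norm_num)]
      norm_num
    rw [← mul_assoc, this]
  have e2 : ∀ a : α, (k a ^ (1/2:ℝ)) ^ (2:ℝ) = k a := by
    intro a
    rw [← ENNReal.rpow_mul]
    norm_num
  have e3 : ∀ a : α, (k a ^ (1/2:ℝ) * h a) ^ (2:ℝ) = k a * h a ^ (2:ℝ) := by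
    intro a
    rw [ENNReal.mul_rpow_of_nonneg _ _ (by norm_num : (0:ℝ) ≤ 2), e2]
  simp only [Pi.mul_apply, e1, e2, e3] at key
  calc (∫⁻ a, k a * h a ∂μ) ^ (2:ℝ)
      ≤ ((∫⁻ a, k a ∂μ) ^ (1/2:ℝ) * (∫⁻ a, k a * h a ^ (2:ℝ) ∂μ) ^ (1/2:ℝ)) ^ (2:ℝ) :=
        ENNReal.rpow_le_rpow key (by norm_num)
    _ = (∫⁻ a, k a ∂μ) * (∫⁻ a, k a * h a ^ (2:ℝ) ∂μ) := by
        rw [ENNReal.mul_rpow_of_nonneg _ _ (by norm_num : (0:ℝ) ≤ 2),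
          ← ENNReal.rpow_mul, ← ENNReal.rpow_mul]
        norm_num

set_option maxHeartbeats 1000000 in
theorem stmt8 (μ : Measure (EuclideanSpace ℝ (Fin 2))) [IsFiniteMeasure μ]
    (K : Set (EuclideanSpace ℝ (Fin 2))) (hK : IsCompact K) (hμK : μ Kᶜ = 0)
    (hKato : Filter.Tendsto
      (fun ε : ℝ => ⨆ x : EuclideanSpace ℝ (Fin 2),
        ∫⁻ y in Metric.ball x ε, ENNReal.ofReal |Real.log (dist x y)| ∂μ)
      (nhdsWithin 0 (Set.Ioi 0)) (nhds 0))
    (C : ℝ) :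
    ∃ M : ENNReal, M ≠ ⊤ ∧ ∀ f : EuclideanSpace ℝ (Fin 2) → ℂ, MemLp f 2 μ →
      MemLp (fun x => ∫ y, ((-Real.log (dist x y) + C : ℝ) : ℂ) * f y ∂μ) 2 μ ∧
      eLpNorm (fun x => ∫ y, ((-Real.log (dist x y) + C : ℝ) : ℂ) * f y ∂μ) 2 μ ≤
        M * eLpNorm f 2 μ := by
  -- extract ε
  have hev : ∀ᶠ ε : ℝ in nhdsWithin 0 (Set.Ioi 0),
      (⨆ x : EuclideanSpace ℝ (Fin 2),
        ∫⁻ y in Metric.ball x ε, ENNReal.ofReal |Real.log (dist x y)| ∂μ) < 1 ∧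
      ε ∈ Set.Ioi (0:ℝ) ∧ ε < 1 := by
    refine (hKato.eventually_lt_const one_pos).and
      (eventually_mem_nhdsWithin.and ?_)
    exact Filter.Eventually.filter_mono nhdsWithin_le_nhds (eventually_lt_nhds one_pos)
  obtain ⟨ε, hsup, hε0, hε1⟩ := hev.exists
  rw [Set.mem_Ioi] at hε0
  -- bound on K's diameter
  obtain ⟨r, hr⟩ := hK.isBounded.subset_closedBall 0
  set R : ℝ := 2 * |r| + 2 with hR
  have hR1 : (1:ℝ) < R := by have := abs_nonneg r; rw [hR]; linarith
  have hdistR : ∀ x ∈ K, ∀ y ∈ K, dist x y < R := by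
    intro x hx y hy
    calc dist x y ≤ dist x 0 + dist 0 y := dist_triangle _ _ _
      _ ≤ r + r := by
          rw [dist_comm (0:EuclideanSpace ℝ (Fin 2)) y]
          exact add_le_add (hr hx) (hr hy)
      _ < R := by
          have : r ≤ |r| := le_abs_self r
          rw [hR]; linarith
  set L : ℝ := -Real.log ε + Real.log R with hL
  have hlogε : Real.log ε ≤ 0 := Real.log_nonpos hε0.le hε1.le
  have hlogR : 0 ≤ Real.log R := Real.log_nonneg hR1.le
  have hlogbound : ∀ t : ℝ, ε ≤ t → t < R → |Real.log t| ≤ L := by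
    intro t htε htR
    rcases le_or_gt t 1 with ht1 | ht1
    · have h1 : Real.log t ≤ 0 := Real.log_nonpos (hε0.trans_le htε).le ht1
      have h2 : Real.log ε ≤ Real.log t := Real.log_le_log hε0 htε
      rw [abs_of_nonpos h1, hL]; linarith
    · have h1 : 0 ≤ Real.log t := Real.log_nonneg ht1.le
      have h2 : Real.log t ≤ Real.log R := Real.log_le_log (by linarith) htR.le
      rw [abs_of_nonneg h1, hL]; linarith
  -- the kernel bound
  set Kv : EuclideanSpace ℝ (Fin 2) → EuclideanSpace ℝ (Fin 2) → ℝ≥0∞ :=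
    fun x y => ENNReal.ofReal (|Real.log (dist x y)| + |C|) with hKv
  have hKvmeas : Measurable (Function.uncurry Kv) := by
    apply ENNReal.measurable_ofReal.comp
    apply Measurable.add _ measurable_const
    exact (Real.measurable_log.comp (continuous_dist.measurable)).abs
  have haeK : ∀ᵐ y ∂μ, y ∈ K := by
    rw [MeasureTheory.ae_iff]
    exact hμK
  set A : ℝ≥0∞ := 1 + ENNReal.ofReal L * μ Set.univ + ENNReal.ofReal |C| * μ Set.univ with hA
  have hAtop : A ≠ ⊤ := by
    rw [hA]
    refine ENNReal.add_ne_top.2 ⟨ENNReal.add_ne_top.2 ⟨one_ne_top, ?_⟩, ?_⟩ <;>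
      exact ENNReal.mul_ne_top ENNReal.ofReal_ne_top (measure_ne_top μ _)
  have h1A : (1:ℝ≥0∞) ≤ A := by
    rw [hA]; exact le_trans le_self_add le_self_add
  have hA0 : A ≠ 0 := (zero_lt_one.trans_le h1A).ne'
  -- key bound: for x ∈ K, ∫⁻ Kv x y ≤ A
  have hbound : ∀ x ∈ K, ∫⁻ y, Kv x y ∂μ ≤ A := by
    intro x hx
    have hsplit : ∀ y, Kv x y = ENNReal.ofReal |Real.log (dist x y)| + ENNReal.ofReal |C| := by
      intro y
      rw [hKv]
      exact ENNReal.ofReal_add (abs_nonneg _) (abs_nonneg _)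
    simp only [hsplit]
    rw [lintegral_add_right _ measurable_const, lintegral_const]
    have hlog : ∫⁻ y, ENNReal.ofReal |Real.log (dist x y)| ∂μ
        ≤ 1 + ENNReal.ofReal L * μ Set.univ := by
      rw [← lintegral_add_compl (fun y => ENNReal.ofReal |Real.log (dist x y)|)
        measurableSet_ball (μ := μ)]
      gcongr
      · exact le_trans (le_iSup (fun x0 : EuclideanSpace ℝ (Fin 2) =>
          ∫⁻ y in Metric.ball x0 ε, ENNReal.ofReal |Real.log (dist x0 y)| ∂μ) x) hsup.le
      · calc ∫⁻ y in (Metric.ball x ε)ᶜ, ENNReal.ofReal |Real.log (dist x y)| ∂μ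
            ≤ ∫⁻ _ in (Metric.ball x ε)ᶜ, ENNReal.ofReal L ∂μ := by
              apply lintegral_mono_ae
              filter_upwards [ae_restrict_of_ae haeK,
                ae_restrict_mem measurableSet_ball.compl] with y hyK hyball
              apply ENNReal.ofReal_le_ofReal
              apply hlogbound
              · rw [Set.mem_compl_iff, Metric.mem_ball, not_lt, dist_comm] at hyball
                exact hyball
              · exact hdistR x hx y hyK
          _ ≤ ENNReal.ofReal L * μ Set.univ := by
              rw [lintegral_const, Measure.restrict_apply MeasurableSet.univ]
              gcongr
              exact le_top
    calc ∫⁻ y, ENNReal.ofReal |Real.log (dist x y)| ∂μ + ENNReal.ofReal |C| * μ Set.univ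
        ≤ (1 + ENNReal.ofReal L * μ Set.univ) + ENNReal.ofReal |C| * μ Set.univ := by gcongr
      _ = A := by rw [hA]
  have hbound' : ∀ y ∈ K, ∫⁻ x, Kv x y ∂μ ≤ A := by
    intro y hy
    have := hbound y hy
    simpa [hKv, dist_comm] using this
  -- now the operator
  refine ⟨A, hAtop, ?_⟩
  intro f hf
  obtain ⟨f', hf'sm, hff'⟩ : ∃ f', StronglyMeasurable f' ∧ f =ᵐ[μ] f' :=
    ⟨_, hf.1.stronglyMeasurable_mk, hf.1.ae_eq_mk⟩
  have hf'2 : MemLp f' 2 μ := hf.ae_eq hff'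
  have hTf : (fun x => ∫ y, ((-Real.log (dist x y) + C : ℝ) : ℂ) * f y ∂μ)
      = fun x => ∫ y, ((-Real.log (dist x y) + C : ℝ) : ℂ) * f' y ∂μ := by
    funext x
    exact integral_congr_ae (hff'.mono fun y hy => by dsimp only; rw [hy])
  rw [hTf, eLpNorm_congr_ae hff']
  set T : EuclideanSpace ℝ (Fin 2) → ℂ :=
    fun x => ∫ y, ((-Real.log (dist x y) + C : ℝ) : ℂ) * f' y ∂μ with hT
  set φ : EuclideanSpace ℝ (Fin 2) → ℝ≥0∞ := fun y => (‖f' y‖₊ : ℝ≥0∞) with hφ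
  have hφmeas : Measurable φ := hf'sm.measurable.enorm
  have hφ2meas : Measurable (fun y => φ y ^ (2:ℝ)) :=
    ENNReal.continuous_rpow_const.measurable.comp hφmeas
  -- measurability of the product kernel with f'
  have hkermeas : Measurable (Function.uncurry
      (fun x y : EuclideanSpace ℝ (Fin 2) => ((-Real.log (dist x y) + C : ℝ) : ℂ) * f' y)) := by
    unfold Function.uncurry
    apply Measurable.mul
    · exact Complex.measurable_ofReal.comp
        (((Real.measurable_log.comp continuous_dist.measurable).neg).add_const C)
    · exact hf'sm.measurable.comp measurable_snd
  have hTsm : StronglyMeasurable T := by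
    rw [hT]
    exact hkermeas.stronglyMeasurable.integral_prod_right
  -- finiteness of ∫⁻ φ²
  have hfin2 : ∫⁻ y, φ y ^ (2:ℝ) ∂μ < ⊤ := by
    have h1 := hf'2.eLpNorm_lt_top
    rw [eLpNorm_eq_lintegral_rpow_enorm_toReal (by norm_num) (by norm_num)] at h1
    simp only [ENNReal.toReal_ofNat] at h1
    rwa [ENNReal.rpow_lt_top_iff_of_pos (by norm_num)] at h1
  -- kernel norm bound
  have hnorm_le : ∀ x y : EuclideanSpace ℝ (Fin 2),
      (‖((-Real.log (dist x y) + C : ℝ) : ℂ) * f' y‖₊ : ℝ≥0∞) ≤ Kv x y * φ y := by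
    intro x y
    rw [nnnorm_mul, ENNReal.coe_mul]
    apply mul_le_mul_left
    rw [← enorm_eq_nnnorm, ← ofReal_norm_eq_enorm, Complex.norm_real, Real.norm_eq_abs, hKv]
    apply ENNReal.ofReal_le_ofReal
    calc |(-Real.log (dist x y) + C)| ≤ |(-Real.log (dist x y))| + |C| := abs_add_le _ _
      _ = |Real.log (dist x y)| + |C| := by rw [abs_neg]
  have hTle : ∀ x, (‖T x‖₊ : ℝ≥0∞) ≤ ∫⁻ y, Kv x y * φ y ∂μ :=
    fun x => le_trans (enorm_integral_le_lintegral_enorm _)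
      (lintegral_mono (hnorm_le x))
  -- the double integral
  set G : EuclideanSpace ℝ (Fin 2) → ℝ≥0∞ := fun x => ∫⁻ y, Kv x y * φ y ^ (2:ℝ) ∂μ with hG
  have hprodmeas : Measurable (Function.uncurry
      (fun x y : EuclideanSpace ℝ (Fin 2) => Kv x y * φ y ^ (2:ℝ))) :=
    hKvmeas.mul (hφ2meas.comp measurable_snd)
  have hGmeas : Measurable G := hprodmeas.lintegral_prod_right
  have hKvx : ∀ x : EuclideanSpace ℝ (Fin 2), Measurable (fun y => Kv x y) :=
    fun x => hKvmeas.of_uncurry_left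
  have hKvy : ∀ y : EuclideanSpace ℝ (Fin 2), Measurable (fun x => Kv x y) :=
    fun y => hKvmeas.of_uncurry_right
  have hswap : ∫⁻ x, G x ∂μ = ∫⁻ y, (∫⁻ x, Kv x y ∂μ) * φ y ^ (2:ℝ) ∂μ := by
    rw [hG]
    rw [lintegral_lintegral_swap hprodmeas.aemeasurable]
    congr 1
    funext y
    rw [lintegral_mul_const _ (hKvy y)]
  have hI2 : ∫⁻ y, (∫⁻ x, Kv x y ∂μ) * φ y ^ (2:ℝ) ∂μ ≤ A * ∫⁻ y, φ y ^ (2:ℝ) ∂μ := by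
    rw [← lintegral_const_mul _ hφ2meas]
    apply lintegral_mono_ae
    filter_upwards [haeK] with y hyK
    exact mul_le_mul_left (hbound' y hyK) _
  have hGint : ∫⁻ x, G x ∂μ ≤ A * ∫⁻ y, φ y ^ (2:ℝ) ∂μ := hswap.le.trans hI2
  have hGfin : ∀ᵐ x ∂μ, G x < ⊤ := by
    apply ae_lt_top hGmeas
    exact (hGint.trans_lt (ENNReal.mul_lt_top hAtop.lt_top hfin2)).ne
  -- helper: a ≤ 1 + a²
  have hle_sq : ∀ a : ℝ≥0∞, a ≤ 1 + a ^ (2:ℝ) := by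
    intro a
    have hsq : a ^ (2:ℝ) = a * a := by
      rw [show (2:ℝ) = ((2:ℕ):ℝ) by norm_num, ENNReal.rpow_natCast, sq]
    rcases le_total a 1 with h | h
    · exact le_trans h le_self_add
    · calc a = 1 * a := (one_mul a).symm
        _ ≤ a * a := mul_le_mul_left h a
        _ = a ^ (2:ℝ) := hsq.symm
        _ ≤ 1 + a ^ (2:ℝ) := le_add_self
  -- a.e. integrability
  have hint : ∀ᵐ x ∂μ, Integrable
      (fun y => ((-Real.log (dist x y) + C : ℝ) : ℂ) * f' y) μ := by
    filter_upwards [haeK, hGfin] with x hxK hGx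
    refine ⟨?_, ?_⟩
    · exact hkermeas.of_uncurry_left.aestronglyMeasurable
    · show (∫⁻ y, (‖((-Real.log (dist x y) + C : ℝ) : ℂ) * f' y‖₊ : ℝ≥0∞) ∂μ) < ⊤
      calc ∫⁻ y, (‖((-Real.log (dist x y) + C : ℝ) : ℂ) * f' y‖₊ : ℝ≥0∞) ∂μ
          ≤ ∫⁻ y, Kv x y * φ y ∂μ := lintegral_mono (hnorm_le x)
        _ ≤ ∫⁻ y, Kv x y * (1 + φ y ^ (2:ℝ)) ∂μ :=
            lintegral_mono fun y => mul_le_mul_right (hle_sq (φ y)) _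
        _ = ∫⁻ y, (Kv x y + Kv x y * φ y ^ (2:ℝ)) ∂μ := by
            congr 1; funext y; rw [mul_add, mul_one]
        _ = (∫⁻ y, Kv x y ∂μ) + G x := by
            rw [lintegral_add_left (hKvx x), hG]
        _ < ⊤ := ENNReal.add_lt_top.2
            ⟨(hbound x hxK).trans_lt (lt_top_iff_ne_top.2 hAtop), hGx⟩
  -- the main estimate
  have hmain : ∫⁻ x, (‖T x‖₊ : ℝ≥0∞) ^ (2:ℝ) ∂μ
      ≤ A * A * ∫⁻ y, φ y ^ (2:ℝ) ∂μ := by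
    have hpt : ∀ᵐ x ∂μ, (‖T x‖₊ : ℝ≥0∞) ^ (2:ℝ) ≤ A * G x := by
      filter_upwards [haeK] with x hxK
      calc (‖T x‖₊ : ℝ≥0∞) ^ (2:ℝ)
          ≤ (∫⁻ y, Kv x y * φ y ∂μ) ^ (2:ℝ) :=
            ENNReal.rpow_le_rpow (hTle x) (by norm_num)
        _ ≤ (∫⁻ y, Kv x y ∂μ) * G x :=
            lintegral_CS μ (hKvx x).aemeasurable hφmeas.aemeasurable
        _ ≤ A * G x := mul_le_mul_left (hbound x hxK) _
    calc ∫⁻ x, (‖T x‖₊ : ℝ≥0∞) ^ (2:ℝ) ∂μ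
        ≤ ∫⁻ x, A * G x ∂μ := lintegral_mono_ae hpt
      _ = A * ∫⁻ x, G x ∂μ := lintegral_const_mul _ hGmeas
      _ ≤ A * (A * ∫⁻ y, φ y ^ (2:ℝ) ∂μ) := mul_le_mul_right hGint _
      _ = A * A * ∫⁻ y, φ y ^ (2:ℝ) ∂μ := by rw [mul_assoc]
  -- conclude
  have heLp : eLpNorm T 2 μ ≤ A * eLpNorm f' 2 μ := by
    rw [eLpNorm_eq_lintegral_rpow_enorm_toReal (by norm_num) (by norm_num),
      eLpNorm_eq_lintegral_rpow_enorm_toReal (by norm_num) (by norm_num)]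
    simp only [ENNReal.toReal_ofNat]
    calc (∫⁻ x, (‖T x‖₊ : ℝ≥0∞) ^ (2:ℝ) ∂μ) ^ (1/2:ℝ)
        ≤ (A * A * ∫⁻ y, (‖f' y‖₊ : ℝ≥0∞) ^ (2:ℝ) ∂μ) ^ (1/2:ℝ) :=
          ENNReal.rpow_le_rpow hmain (by norm_num)
      _ = A * (∫⁻ y, (‖f' y‖₊ : ℝ≥0∞) ^ (2:ℝ) ∂μ) ^ (1/2:ℝ) := by
          rw [ENNReal.mul_rpow_of_nonneg _ _ (by norm_num : (0:ℝ) ≤ 1/2),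
            ENNReal.mul_rpow_of_nonneg _ _ (by norm_num : (0:ℝ) ≤ 1/2),
            ← ENNReal.rpow_add_of_nonneg _ _ (by norm_num) (by norm_num)]
          norm_num
  refine ⟨⟨hTsm.aestronglyMeasurable, ?_⟩, heLp⟩
  exact heLp.trans_lt (ENNReal.mul_lt_top hAtop.lt_top hf'2.eLpNorm_lt_top)
end

section
/- Let T(k) = T₀ + (1/ln k) T₁ + E(k), where T₀ = (·,φ)φ with ‖φ‖=1, T₁ is a bounded self-adjoint operator, and ‖E(k)‖ = O(1/ln²k) as k → 0+. If for small k > 0 the operator T(k) has an eigenvalue ω(k) with normalized eigenvector φ_k satisfying ‖φ_k - φ‖ = O(1/ln k), then ω(k) = 1 + (1/ln k)(T₁φ,φ) + O(1/ln²k) as k → 0+. -/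
open Asymptotics
open scoped InnerProductSpace

lemma aux_norm {H : Type*} [NormedAddCommGroup H] [InnerProductSpace ℂ H]
    (φ x : H) (hφ : ‖φ‖ = 1) (hx : ‖x‖ = 1) :
    ‖⟪φ, x⟫_ℂ‖ ^ 2 = 1 - ‖x - φ‖ ^ 2 + ‖⟪φ, x - φ⟫_ℂ‖ ^ 2 := by
  have h1 : ⟪φ, x⟫_ℂ = 1 + ⟪φ, x - φ⟫_ℂ := by
    rw [inner_sub_right, inner_self_eq_norm_sq_to_K, hφ]
    push_cast; ring
  have h2 : (1 : ℝ) = 1 + 2 * (⟪φ, x - φ⟫_ℂ).re + ‖x - φ‖ ^ 2 := by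
    have := norm_add_sq (𝕜 := ℂ) φ (x - φ)
    simp only [add_sub_cancel, hx, hφ, one_pow] at this
    exact this
  have hsymm : (⟪x - φ, φ⟫_ℂ).re = (⟪φ, x - φ⟫_ℂ).re := by
    rw [← inner_conj_symm φ (x - φ)]; exact Complex.conj_re _
  have h3 : ‖⟪φ, x⟫_ℂ‖ ^ 2 = 1 + 2 * (⟪φ, x - φ⟫_ℂ).re + ‖⟪φ, x - φ⟫_ℂ‖ ^ 2 := by
    rw [h1]
    have := Complex.normSq_add 1 ⟪φ, x - φ⟫_ℂ
    rw [Complex.sq_norm, Complex.sq_norm, this]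
    simp only [Complex.normSq_one, one_mul, Complex.conj_re]
    linarith
  linarith

lemma key {H : Type*} [NormedAddCommGroup H] [InnerProductSpace ℂ H]
    (φ x : H) (hφ : ‖φ‖ = 1) (hx : ‖x‖ = 1) (T₀ T₁ Tk : H →L[ℂ] H)
    (hT₀ : T₀ x = ⟪φ, x⟫_ℂ • φ) (s ω : ℝ) (hT : Tk x = (ω : ℂ) • x) :
    ω - 1 - s * (⟪φ, T₁ φ⟫_ℂ).re =
      (⟪x, (Tk - (T₀ + s • T₁)) x⟫_ℂ).re
      + (‖⟪φ, x - φ⟫_ℂ‖ ^ 2 - ‖x - φ‖ ^ 2)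
      + s * (⟪x - φ, T₁ x⟫_ℂ + ⟪φ, T₁ (x - φ)⟫_ℂ).re := by
  have hxx : ⟪x, x⟫_ℂ = 1 := by
    rw [inner_self_eq_norm_sq_to_K, hx]; norm_num
  have h1 : (ω : ℂ) = ⟪x, Tk x⟫_ℂ := by
    rw [hT, inner_smul_right, hxx, mul_one]
  have h2 : ⟪x, Tk x⟫_ℂ = ⟪x, (Tk - (T₀ + s • T₁)) x⟫_ℂ
      + ⟪φ, x⟫_ℂ * ⟪x, φ⟫_ℂ + (s : ℂ) * ⟪x, T₁ x⟫_ℂ := by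
    simp only [ContinuousLinearMap.sub_apply, ContinuousLinearMap.add_apply,
      ContinuousLinearMap.smul_apply, inner_sub_right, inner_add_right, hT₀,
      inner_smul_right, ← Complex.coe_smul]
    ring
  have h3 : ⟪x, T₁ x⟫_ℂ = ⟪φ, T₁ φ⟫_ℂ + (⟪x - φ, T₁ x⟫_ℂ + ⟪φ, T₁ (x - φ)⟫_ℂ) := by
    simp only [inner_sub_left, map_sub, inner_sub_right]
    ring
  have h4 : (⟪φ, x⟫_ℂ * ⟪x, φ⟫_ℂ).re = ‖⟪φ, x⟫_ℂ‖ ^ 2 := by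
    rw [← inner_conj_symm x φ]
    rw [Complex.mul_conj]
    simp [← Complex.sq_norm]
    norm_cast
  have h5 := aux_norm φ x hφ hx
  have hre : ω = (⟪x, (Tk - (T₀ + s • T₁)) x⟫_ℂ).re + ‖⟪φ, x⟫_ℂ‖ ^ 2
      + s * ((⟪φ, T₁ φ⟫_ℂ).re + (⟪x - φ, T₁ x⟫_ℂ + ⟪φ, T₁ (x - φ)⟫_ℂ).re) := by
    have := congrArg Complex.re (h1.trans (h2.trans (by rw [h3])))
    simpa [h4, Complex.ofReal_re, mul_comm] using this
  rw [hre, h5]; ring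

theorem stmt11 {H : Type*} [NormedAddCommGroup H] [InnerProductSpace ℂ H]
    [CompleteSpace H] (φ : H) (hφ : ‖φ‖ = 1)
    (T₀ T₁ : H →L[ℂ] H) (hT₀ : ∀ x, T₀ x = ⟪φ, x⟫_ℂ • φ)
    (hT₁ : IsSelfAdjoint T₁)
    (T : ℝ → H →L[ℂ] H) (hTsa : ∀ k : ℝ, 0 < k → IsSelfAdjoint (T k))
    (hE : (fun k : ℝ => ‖T k - (T₀ + (1 / Real.log k) • T₁)‖)
      =O[nhdsWithin 0 (Set.Ioi 0)] fun k => 1 / Real.log k ^ 2)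
    (ω : ℝ → ℝ) (φk : ℝ → H)
    (heig : ∀ᶠ k in nhdsWithin 0 (Set.Ioi 0),
      T k (φk k) = (ω k : ℂ) • φk k ∧ ‖φk k‖ = 1)
    (hφk : (fun k : ℝ => ‖φk k - φ‖)
      =O[nhdsWithin 0 (Set.Ioi 0)] fun k => 1 / Real.log k) :
    (fun k : ℝ => ω k - 1 - (1 / Real.log k) * (⟪φ, T₁ φ⟫_ℂ).re)
      =O[nhdsWithin 0 (Set.Ioi 0)] fun k => 1 / Real.log k ^ 2 := by
  set l := nhdsWithin (0 : ℝ) (Set.Ioi 0) with hl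
  set A := fun k : ℝ =>
    (⟪φk k, (T k - (T₀ + (1 / Real.log k) • T₁)) (φk k)⟫_ℂ).re with hA
  set B := fun k : ℝ => ‖⟪φ, φk k - φ⟫_ℂ‖ ^ 2 - ‖φk k - φ‖ ^ 2 with hB
  set C := fun k : ℝ =>
    (1 / Real.log k) * (⟪φk k - φ, T₁ (φk k)⟫_ℂ + ⟪φ, T₁ (φk k - φ)⟫_ℂ).re with hC
  have hmul : (fun k : ℝ => (1 / Real.log k) * (1 / Real.log k))
      = fun k : ℝ => 1 / Real.log k ^ 2 := by
    funext k; rw [div_mul_div_comm, one_mul, ← sq]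
  have hδ2 : (fun k : ℝ => ‖φk k - φ‖ * ‖φk k - φ‖) =O[l]
      fun k : ℝ => 1 / Real.log k ^ 2 := hmul ▸ hφk.mul hφk
  -- A term
  have hAO : A =O[l] fun k : ℝ => 1 / Real.log k ^ 2 := by
    refine (IsBigO.of_bound 1 ?_).trans hE
    filter_upwards [heig] with k hk
    rw [one_mul, norm_norm]
    calc ‖A k‖ ≤ ‖⟪φk k, (T k - (T₀ + (1 / Real.log k) • T₁)) (φk k)⟫_ℂ‖ :=
          Complex.abs_re_le_norm _
      _ ≤ ‖φk k‖ * ‖(T k - (T₀ + (1 / Real.log k) • T₁)) (φk k)‖ :=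
          norm_inner_le_norm _ _
      _ ≤ ‖φk k‖ * (‖T k - (T₀ + (1 / Real.log k) • T₁)‖ * ‖φk k‖) := by
          gcongr; exact ContinuousLinearMap.le_opNorm _ _
      _ = ‖T k - (T₀ + (1 / Real.log k) • T₁)‖ := by rw [hk.2]; ring
  -- B term
  have hBO : B =O[l] fun k : ℝ => 1 / Real.log k ^ 2 := by
    refine (IsBigO.of_bound 2 ?_).trans hδ2
    filter_upwards with k
    have h1 : ‖⟪φ, φk k - φ⟫_ℂ‖ ≤ ‖φk k - φ‖ := by
      calc ‖⟪φ, φk k - φ⟫_ℂ‖ ≤ ‖φ‖ * ‖φk k - φ‖ := norm_inner_le_norm _ _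
        _ = ‖φk k - φ‖ := by rw [hφ, one_mul]
    have h2 : ‖⟪φ, φk k - φ⟫_ℂ‖ ^ 2 ≤ ‖φk k - φ‖ ^ 2 :=
      pow_le_pow_left₀ (norm_nonneg _) h1 2
    have h3 : (0:ℝ) ≤ ‖⟪φ, φk k - φ⟫_ℂ‖ ^ 2 := by positivity
    have h4 : ‖(‖φk k - φ‖ * ‖φk k - φ‖)‖ = ‖φk k - φ‖ ^ 2 := by
      rw [Real.norm_eq_abs, abs_of_nonneg (by positivity)]; ring
    rw [hB]
    simp only
    rw [Real.norm_eq_abs, h4, abs_le]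
    constructor <;> linarith
  -- C term
  have hCO : C =O[l] fun k : ℝ => 1 / Real.log k ^ 2 := by
    refine (IsBigO.of_bound (2 * ‖T₁‖) ?_).trans
      (hmul ▸ (isBigO_refl (fun k : ℝ => 1 / Real.log k) l).mul hφk)
    filter_upwards [heig] with k hk
    have hre : |(⟪φk k - φ, T₁ (φk k)⟫_ℂ + ⟪φ, T₁ (φk k - φ)⟫_ℂ).re|
        ≤ 2 * ‖T₁‖ * ‖φk k - φ‖ := by
      calc |(⟪φk k - φ, T₁ (φk k)⟫_ℂ + ⟪φ, T₁ (φk k - φ)⟫_ℂ).re|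
          ≤ ‖⟪φk k - φ, T₁ (φk k)⟫_ℂ + ⟪φ, T₁ (φk k - φ)⟫_ℂ‖ :=
            Complex.abs_re_le_norm _
        _ ≤ ‖⟪φk k - φ, T₁ (φk k)⟫_ℂ‖ + ‖⟪φ, T₁ (φk k - φ)⟫_ℂ‖ := norm_add_le _ _
        _ ≤ ‖φk k - φ‖ * ‖T₁ (φk k)‖ + ‖φ‖ * ‖T₁ (φk k - φ)‖ :=
            add_le_add (norm_inner_le_norm _ _) (norm_inner_le_norm _ _)
        _ ≤ ‖φk k - φ‖ * (‖T₁‖ * ‖φk k‖) + ‖φ‖ * (‖T₁‖ * ‖φk k - φ‖) := by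
            gcongr <;> exact ContinuousLinearMap.le_opNorm _ _
        _ = 2 * ‖T₁‖ * ‖φk k - φ‖ := by rw [hk.2, hφ]; ring
    calc ‖C k‖ = |1 / Real.log k| *
          |(⟪φk k - φ, T₁ (φk k)⟫_ℂ + ⟪φ, T₁ (φk k - φ)⟫_ℂ).re| := by
          rw [hC, Real.norm_eq_abs, abs_mul]
      _ ≤ |1 / Real.log k| * (2 * ‖T₁‖ * ‖φk k - φ‖) := by
          gcongr
      _ = 2 * ‖T₁‖ * ‖(1 / Real.log k) * ‖φk k - φ‖‖ := by
          rw [Real.norm_eq_abs, abs_mul, abs_of_nonneg (norm_nonneg _)]; ring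
  have heq : (fun k : ℝ => ω k - 1 - (1 / Real.log k) * (⟪φ, T₁ φ⟫_ℂ).re)
      =ᶠ[l] fun k : ℝ => A k + B k + C k := by
    filter_upwards [heig] with k hk
    exact key φ (φk k) hφ hk.2 T₀ T₁ (T k) (hT₀ (φk k)) (1 / Real.log k) (ω k) hk.1
  exact ((hAO.add hBO).add hCO).congr' heq.symm Filter.EventuallyEq.rfl
end
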